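/- Let l be a nonnegative integer, ω > 0, σ ∈ {+1, −1}, and set Z = 2σ·√((l+1)·ω), ε = (5 + 2l)·ω, and u(r) = r^{l+1}·e^{−ω r²/2}·(r + σ·√((l+1)/ω)). Then for every r > 0, −u″(r) + (ω² r² + Z/r + l(l+1)/r²)·u(r) = ε·u(r). -/

import Mathlib

/-- Exact n = 1 solutions of the Hooke atom (two electrons in an external
oscillator potential): energy `ε = (5+2l)ω` under `Z = ±2√((l+1)ω)`. -/
theorem hooke_oscillator_n1 (l : ℕ) (ω : ℝ) (hω : 0 < ω) (σ : ℝ)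
    (hσ : σ = 1 ∨ σ = -1) (Z ε : ℝ)
    (hZ : Z = 2 * σ * Real.sqrt (((l : ℝ) + 1) * ω))
    (hε : ε = (5 + 2 * (l : ℝ)) * ω)
    (u : ℝ → ℝ)
    (hu : u = fun r : ℝ =>
      r ^ (l + 1) * Real.exp (-ω * r ^ 2 / 2) *
        (r + σ * Real.sqrt (((l : ℝ) + 1) / ω)))
    (r : ℝ) (hr : 0 < r) :
    -deriv (deriv u) r
      + (ω ^ 2 * r ^ 2 + Z / r + (l : ℝ) * ((l : ℝ) + 1) / r ^ 2) * u r
    = ε * u r := by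
  have hk1 : (0:ℝ) ≤ ((l : ℝ) + 1) / ω := by positivity
  obtain ⟨s, hs⟩ : ∃ s, Real.sqrt (((l : ℝ) + 1) / ω) = s := ⟨_, rfl⟩
  rw [hs] at hu
  have hσ2 : σ ^ 2 = 1 := by rcases hσ with h | h <;> simp [h]
  have hs2 : ω * s ^ 2 = (l : ℝ) + 1 := by
    rw [← hs, Real.sq_sqrt hk1]
    field_simp
  have hZs : Z = 2 * ω * (σ * s) := by
    rw [hZ, ← hs]
    have h : Real.sqrt (((l : ℝ) + 1) * ω) = ω * Real.sqrt (((l : ℝ) + 1) / ω) := by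
      rw [← Real.sqrt_sq hω.le, ← Real.sqrt_mul (by positivity)]
      congr 1
      field_simp
      rw [Real.sq_sqrt (by positivity)]
    rw [h]; ring
  subst hu
  set L : ℝ := (l : ℝ) with hL
  -- exponential derivative
  have hE : ∀ x : ℝ, HasDerivAt (fun y : ℝ => Real.exp (-ω * y ^ 2 / 2))
      (-(ω * x) * Real.exp (-ω * x ^ 2 / 2)) x := by
    intro x
    have h1 : HasDerivAt (fun y : ℝ => -ω * y ^ 2 / 2) (-(ω * x)) x := by
      have := ((hasDerivAt_pow 2 x).const_mul (-ω)).div_const 2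
      refine this.congr_deriv ?_
      push_cast; ring
    have := h1.exp
    convert this using 1
    ring
  have hpow1 : ∀ x : ℝ, HasDerivAt (fun y : ℝ => y ^ (l + 1)) ((L + 1) * x ^ l) x := by
    intro x
    have := hasDerivAt_pow (l + 1) x
    simpa [hL] using this
  have hpowl : ∀ x : ℝ, HasDerivAt (fun y : ℝ => y ^ l) (L * x ^ (l - 1)) x := by
    intro x
    simpa [hL] using hasDerivAt_pow l x
  have hpow2 : ∀ x : ℝ, HasDerivAt (fun y : ℝ => y ^ (l + 2)) ((L + 2) * x ^ (l + 1)) x := by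
    intro x
    have := hasDerivAt_pow (l + 2) x
    simpa [hL] using this
  -- first derivative
  have hd1 : deriv (fun x : ℝ => x ^ (l + 1) * Real.exp (-ω * x ^ 2 / 2) * (x + σ * s))
      = fun x : ℝ => Real.exp (-ω * x ^ 2 / 2) *
          (((L + 1) * x ^ l - ω * x ^ (l + 2)) * (x + σ * s) + x ^ (l + 1)) := by
    funext x
    have h := (((hpow1 x).mul (hE x)).mul ((hasDerivAt_id x).add_const (σ * s)))
    simp only [id_eq] at h
    have h2 : HasDerivAt (fun x : ℝ => x ^ (l + 1) * Real.exp (-ω * x ^ 2 / 2) * (x + σ * s))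
        (Real.exp (-ω * x ^ 2 / 2) *
          (((L + 1) * x ^ l - ω * x ^ (l + 2)) * (x + σ * s) + x ^ (l + 1))) x := by
      refine h.congr_deriv ?_
      simp only [Pi.mul_apply]; ring
    exact h2.deriv
  -- second derivative at r
  have hG : HasDerivAt (fun x : ℝ =>
        ((L + 1) * x ^ l - ω * x ^ (l + 2)) * (x + σ * s) + x ^ (l + 1))
      ((((L + 1) * (L * r ^ (l - 1)) - ω * ((L + 2) * r ^ (l + 1))) * (r + σ * s)
        + (((L + 1) * r ^ l - ω * r ^ (l + 2)) * 1)) + (L + 1) * r ^ l) r := by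
    have h := ((((hpowl r).const_mul (L + 1)).sub ((hpow2 r).const_mul ω)).mul
      ((hasDerivAt_id r).add_const (σ * s))).add (hpow1 r)
    exact h.congr_deriv (by simp only [id_eq, Pi.sub_apply])
  have hd2 : deriv (deriv (fun x : ℝ =>
        x ^ (l + 1) * Real.exp (-ω * x ^ 2 / 2) * (x + σ * s))) r
      = -(ω * r) * Real.exp (-ω * r ^ 2 / 2) *
          (((L + 1) * r ^ l - ω * r ^ (l + 2)) * (r + σ * s) + r ^ (l + 1))
        + Real.exp (-ω * r ^ 2 / 2) *
          ((((L + 1) * (L * r ^ (l - 1)) - ω * ((L + 2) * r ^ (l + 1))) * (r + σ * s)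
            + (((L + 1) * r ^ l - ω * r ^ (l + 2)) * 1)) + (L + 1) * r ^ l) := by
    rw [hd1]
    exact ((hE r).mul hG).deriv
  rw [hd2, hZs, hε]
  obtain ⟨E, hEr⟩ : ∃ E, Real.exp (-ω * r ^ 2 / 2) = E := ⟨_, rfl⟩
  beta_reduce
  rw [hEr]
  rcases l with _ | m
  · simp only [hL, Nat.cast_zero] at hs2 ⊢
    field_simp
    linear_combination (2 * E * r ^ 2 * σ ^ 2) * hs2
      + (2 * E * r ^ 2) * hσ2
  · simp only [Nat.add_sub_cancel]
    field_simp
    linear_combination (2 * E * r ^ 3 * r ^ m * σ ^ 2) * hs2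
      + (2 * E * r ^ 3 * r ^ m * (L + 1)) * hσ2
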